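/- For every infinite partition X of ℕ and every infinite set r ⊆ Min(X) with 0 ∈ r, there exists an infinite partition Y of ℕ coarser than X such that Min(Y) = r. (This is the block-merging construction used in the proof of the paper's Fact 2.3.) -/
import Mathlib


/-- The set of infinite partitions of ℕ, identified with equivalence relations
on ℕ with infinite quotient. -/
abbrev InfPart := {X : Setoid ℕ // Infinite (Quotient X)}

/-- The dual Ellentuck neighborhood `[s,X]_n`: all infinite partitions `Y` such that
`s` is an `n`-segment of `Y` and `Y` is coarser than `X`. -/
def nbhd (n : ℕ) (s : ℕ → ℕ → Prop) (X : InfPart) : Set InfPart :=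
  {Y | (∀ i < n, ∀ j < n, (s i j ↔ Y.1.r i j)) ∧ ∀ a b, X.1.r a b → Y.1.r a b}

/-- The condition for `[s,X]_n` to be a (nonempty-typed) dual Ellentuck neighborhood:
`∀ i j < n, X.r i j → s i j`. -/
def IsNbhd (n : ℕ) (s : ℕ → ℕ → Prop) (X : InfPart) : Prop :=
  ∀ i < n, ∀ j < n, (X.1.r i j → s i j)


/-- A partition Y is coarser than X. -/
def Coarser (Y X : Setoid ℕ) : Prop := ∀ n m, X.r n m → Y.r n m

/-- Min(X): the set of least elements of the blocks of X. -/
def MinSet (X : Setoid ℕ) : Set ℕ := {k | ∀ m, X.r k m → k ≤ m}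

/-- For every infinite partition X and infinite r ⊆ Min(X) with 0 ∈ r there is an
infinite partition Y coarser than X with Min(Y) = r. -/
theorem exists_coarser_minSet (X : InfPart) (r : Set ℕ) (hr : r.Infinite)
    (hsub : r ⊆ MinSet X.1) (h0 : 0 ∈ r) :
    ∃ Y : InfPart, Coarser Y.1 X.1 ∧ MinSet Y.1 = r := by
  classical
  have hex : ∀ n : ℕ, ∃ k, X.1.r n k := fun n => ⟨n, X.1.refl n⟩
  set m : ℕ → ℕ := fun n => Nat.find (hex n) with hm
  have hmrel : ∀ n, X.1.r n (m n) := fun n => Nat.find_spec (hex n)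
  have hmmin : ∀ n k, X.1.r n k → m n ≤ k := fun n k h => Nat.find_min' _ h
  have hmle : ∀ n, m n ≤ n := fun n => hmmin n n (X.1.refl n)
  have hmeq : ∀ a b, X.1.r a b → m a = m b := by
    intro a b h
    exact le_antisymm (hmmin a _ (X.1.trans h (hmrel b)))
      (hmmin b _ (X.1.trans (X.1.symm h) (hmrel a)))
  set g : ℕ → ℕ := fun n => sSup (r ∩ Set.Iic (m n)) with hg
  have hne : ∀ n, (r ∩ Set.Iic (m n)).Nonempty := fun n => ⟨0, h0, Nat.zero_le _⟩
  have hbdd : ∀ n, BddAbove (r ∩ Set.Iic (m n)) := fun n => ⟨m n, fun x hx => hx.2⟩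
  have hgmem : ∀ n, g n ∈ r ∩ Set.Iic (m n) := fun n => Nat.sSup_mem (hne n) (hbdd n)
  have hgle : ∀ n, g n ≤ m n := fun n => (hgmem n).2
  have hgr : ∀ n, g n ∈ r := fun n => (hgmem n).1
  have hgge : ∀ n k, k ∈ r → k ≤ m n → k ≤ g n := fun n k hk hkm => le_csSup (hbdd n) ⟨hk, hkm⟩
  have hmfix : ∀ k ∈ r, m k = k := fun k hk =>
    le_antisymm (hmle k) (hsub hk (m k) (hmrel k))
  have hgfix : ∀ k ∈ r, g k = k := by
    intro k hk
    refine le_antisymm ((hgle k).trans_eq (hmfix k hk)) (hgge k k hk ?_)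
    rw [hmfix k hk]
  have hgeqm : ∀ a b, X.1.r a b → g a = g b := by
    intro a b h
    simp only [hg, hmeq a b h]
  let Ys : Setoid ℕ := ⟨fun a b => g a = g b, ⟨fun _ => rfl, Eq.symm, Eq.trans⟩⟩
  have hYr : ∀ a b, Ys.r a b ↔ g a = g b := fun a b => Iff.rfl
  have hinf : Infinite (Quotient Ys) := by
    have hinj : Function.Injective (fun k : r => (⟦(k : ℕ)⟧ : Quotient Ys)) := by
      intro a b hab
      have h : g (a : ℕ) = g (b : ℕ) := Quotient.exact hab
      rwa [hgfix a a.2, hgfix b b.2, ← Subtype.ext_iff] at h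
    have := hr.to_subtype
    exact Infinite.of_injective _ hinj
  refine ⟨⟨Ys, hinf⟩, hgeqm, ?_⟩
  ext k
  constructor
  · intro hk
    have h1 : Ys.r k (g k) := (hgfix (g k) (hgr k)).symm
    have h2 : k ≤ g k := hk (g k) h1
    have h3 : g k ≤ k := (hgle k).trans (hmle k)
    have h4 : g k = k := le_antisymm h3 h2
    exact h4 ▸ hgr k
  · intro hk mm hrel
    have hrel' : g k = g mm := hrel
    calc k = g mm := (hgfix k hk).symm.trans hrel'
      _ ≤ m mm := hgle mm
      _ ≤ mm := hmle mm
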